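/- For any Dyck path π with corner set c(π), χ(π, 0) = (1−q)^{-|c(π)|} · ∑_{S ⊆ c(π)} (−1)^{|S|} · χ(π_S), where π_S is the Dyck path obtained from π by flipping the corners in S, and χ(π,0) is the weighted characteristic function with all corner weights equal to 0. -/

import Mathlib

/-!
STATEMENT 12: χ(π, 0) = (1−q)^{-|c(π)|} · ∑_{S ⊆ c(π)} (−1)^{|S|} χ(π_S), where π_S
is the path π with the corners in S flipped, and χ(π,0) is the weighted characteristic
function with all corner weights 0.
-/

noncomputable section
open MvPolynomial

abbrev K : Type := RatFunc ℚ

noncomputable def q : K := RatFunc.X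

/-- A Dyck word: `true` = North step, `false` = East step; equal numbers of each,
and every prefix has at least as many North as East steps (path stays above the diagonal). -/
def IsDyckWord (s : List Bool) : Prop :=
  s.count true = s.count false ∧ ∀ k : ℕ, ((s.take k).count false) ≤ ((s.take k).count true)

/-- the (sorted) list of positions of the North steps of `s` -/
def Npos (s : List Bool) : List ℕ :=
  (List.range s.length).filter (fun p => s.getD p false = true)

/-- the (sorted) list of positions of the East steps of `s` -/
def Epos (s : List Bool) : List ℕ :=
  (List.range s.length).filter (fun p => s.getD p false = false)

/-- `Area(π)`: the pairs `(i,j)` (0-indexed; cell in column i+1, row j+1) with `i < j`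
such that the cell lies under the path, i.e. the (j+1)-st North step occurs before the
(i+1)-st East step. -/
def area (s : List Bool) (n : ℕ) : Finset (Fin n × Fin n) :=
  Finset.univ.filter (fun p => (p.1 : ℕ) < (p.2 : ℕ) ∧
    (Npos s).getD p.2 0 < (Epos s).getD p.1 0)

/-- `c(π)`: corners, i.e. cells `(i,j)` (0-indexed) above the path whose southern and
eastern neighbours are below the path. -/
def corners (s : List Bool) (n : ℕ) : Finset (Fin n × Fin n) :=
  Finset.univ.filter (fun p => ¬ ((Npos s).getD p.2 0 < (Epos s).getD p.1 0) ∧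
    (Npos s).getD ((p.2 : ℕ) - 1) 0 < (Epos s).getD p.1 0 ∧
    (Npos s).getD p.2 0 < (Epos s).getD ((p.1 : ℕ) + 1) 0)

/-- The characteristic function `χ(π) = ∑_{w ∈ ℤ_{>0}^n} q^{inv(π,w)} x_w`
as a formal power series in the variables x_i, i ∈ ℤ_{>0}; the coefficient of
a monomial d is the (finite) sum of q^{inv(π,w)} over all w whose monomial x_w is d. -/
noncomputable def chi {n : ℕ} (A : Finset (Fin n × Fin n)) : MvPowerSeries ℕ+ K :=
  fun d : ℕ+ →₀ ℕ =>
    ∑ w : Fin n → {x // x ∈ d.support},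
      if (∑ i : Fin n, Finsupp.single ((w i : ℕ+)) 1) = d
      then q ^ ((A.filter (fun p => (w p.1 : ℕ+) > (w p.2 : ℕ+))).card) else 0

/-- The weighted characteristic function `χ(π, wt)`, where `A = Area(π)`,
`Cn = c(π)` and `wt` is the weight function on corners. -/
noncomputable def chiwt {n : ℕ} (A Cn : Finset (Fin n × Fin n))
    (wt : Fin n × Fin n → K) : MvPowerSeries ℕ+ K :=
  fun d : ℕ+ →₀ ℕ =>
    ∑ w : Fin n → {x // x ∈ d.support},
      if (∑ i : Fin n, Finsupp.single ((w i : ℕ+)) 1) = d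
      then q ^ ((A.filter (fun p => (w p.1 : ℕ+) > (w p.2 : ℕ+))).card) *
        ∏ p ∈ Cn.filter (fun p => (w p.1 : ℕ+) ≤ (w p.2 : ℕ+)), wt p
      else 0

/-- flip the corners of π lying in the set S (swap the East/North step pair at each
corresponding valley; distinct corners involve disjoint pairs of positions). -/
noncomputable def flipSet {n : ℕ} (s : List Bool) (S : Finset (Fin n × Fin n)) :
    List Bool :=
  S.toList.foldl
    (fun t p => (t.set ((Epos s).getD (p.1 : ℕ) 0) true).set
      ((Epos s).getD (p.1 : ℕ) 0 + 1) false) s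

section ListLemmas

/-- length of positions-filter equals count -/
lemma length_filter_range_getD (s : List Bool) (b : Bool) :
    ((List.range s.length).filter (fun p => s.getD p false = b)).length = s.count b := by
  induction s using List.reverseRecOn with
  | nil => simp
  | append_singleton l x ih =>
    rw [List.length_append, List.length_singleton, List.range_succ, List.filter_append,
      List.length_append, List.count_append]
    congr 1
    · rw [← ih]
      congr 1
      apply List.filter_congr
      intro p hp
      rw [List.mem_range] at hp
      rw [List.getD_append _ _ _ _ hp]
    · simp only [List.filter_singleton]
      have : (l ++ [x]).getD l.length false = x := by
        rw [List.getD_eq_getElem _ _ (by simp)]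
        simp
      rw [this]
      by_cases h : x = b <;> simp [h, List.count_singleton, Ne.symm]

lemma sorted_filter_range (m : ℕ) (p : ℕ → Bool) :
    List.Pairwise (· < ·) ((List.range m).filter p) :=
  (List.pairwise_lt_range (n := m)).filter p

lemma nodup_filter_range (m : ℕ) (p : ℕ → Bool) :
    ((List.range m).filter p).Nodup :=
  (List.nodup_range (n := m)).filter p

/-- downward-closed filter of a sorted list is a prefix -/
lemma sorted_filter_lt_eq_take (l : List ℕ) (hl : List.Pairwise (· < ·) l) (m : ℕ) :
    l.filter (fun x => decide (x < m)) = l.take (l.filter (fun x => decide (x < m))).length := by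
  induction l with
  | nil => simp
  | cons a t ih =>
    have hst : List.Pairwise (· < ·) t := hl.of_cons
    by_cases ha : a < m
    · have hd : (decide (a < m)) = true := by simpa using ha
      rw [List.filter_cons, hd]
      simp only [if_true, List.length_cons, List.take_succ_cons]
      congr 1
      exact ih hst
    · have hnil : t.filter (fun x => decide (x < m)) = [] := by
        apply List.filter_eq_nil_iff.2
        intro x hx
        simp only [decide_eq_true_eq]
        have := (List.pairwise_cons.1 hl).1 x hx
        omega
      have hd : (decide (a < m)) = false := by simpa using ha
      rw [List.filter_cons, hd]
      simp [hnil]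


/-- if at least k+1 elements of a sorted list are < m then the k-th element is < m -/
lemma getD_lt_of_lt_length_filter (l : List ℕ) (hl : List.Pairwise (· < ·) l) (m k : ℕ)
    (hk : k < (l.filter (fun x => decide (x < m))).length) : l.getD k 0 < m := by
  set c := (l.filter (fun x => decide (x < m))).length with hc
  have hcl : c ≤ l.length := by rw [hc]; exact List.length_filter_le _ _
  have hkl : k < l.length := lt_of_lt_of_le hk hcl
  rw [List.getD_eq_getElem _ _ hkl]
  have htake := sorted_filter_lt_eq_take l hl m
  have : l[k] ∈ l.filter (fun x => decide (x < m)) := by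
    rw [htake, ← hc]
    have : l[k] = (l.take c)[k]'(by rw [List.length_take]; omega) := by
      rw [List.getElem_take]
    rw [this]
    exact List.getElem_mem _
  have := List.of_mem_filter this
  simpa using this

/-- conversely, if the k-th element is < m then at least k+1 elements are < m -/
lemma lt_length_filter_of_getD_lt (l : List ℕ) (hl : List.Pairwise (· < ·) l) (m k : ℕ)
    (hkl : k < l.length) (h : l.getD k 0 < m) :
    k < (l.filter (fun x => decide (x < m))).length := by
  have hall : ∀ x ∈ l.take (k+1), decide (x < m) = true := by
    intro x hx
    rw [List.mem_iff_getElem] at hx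
    obtain ⟨i, hi, hix⟩ := hx
    rw [List.length_take] at hi
    have hi' : i < l.length := by omega
    have hxe : x = l[i] := by rw [← hix, List.getElem_take]
    have hle : l[i] ≤ l.getD k 0 := by
      rw [List.getD_eq_getElem _ _ hkl]
      rcases lt_or_eq_of_le (by omega : i ≤ k) with hik | hik
      · exact le_of_lt (List.Pairwise.rel_get_of_lt hl (a := ⟨i, hi'⟩) (b := ⟨k, hkl⟩) hik)
      · subst hik; exact le_refl _
    simp only [decide_eq_true_eq]
    omega
  have hsub : List.Sublist (l.take (k+1)) (l.filter (fun x => decide (x < m))) := by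
    have h1 : (l.take (k+1)).filter (fun x => decide (x < m)) = l.take (k+1) :=
      List.filter_eq_self.2 hall
    rw [← h1]
    exact (List.take_sublist _ _).filter _
  have := hsub.length_le
  rw [List.length_take] at this
  omega


lemma getD_strictMono {l : List ℕ} (hl : List.Pairwise (· < ·) l) {a b : ℕ}
    (hab : a < b) (hb : b < l.length) : l.getD a 0 < l.getD b 0 := by
  rw [List.getD_eq_getElem _ _ (lt_trans hab hb), List.getD_eq_getElem _ _ hb]
  exact List.Pairwise.rel_get_of_lt hl (a := ⟨a, lt_trans hab hb⟩) (b := ⟨b, hb⟩) hab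

lemma getD_monotone {l : List ℕ} (hl : List.Pairwise (· < ·) l) {a b : ℕ}
    (hab : a ≤ b) (hb : b < l.length) : l.getD a 0 ≤ l.getD b 0 := by
  rcases lt_or_eq_of_le hab with h | h
  · exact le_of_lt (getD_strictMono hl h hb)
  · subst h; exact le_refl _

lemma getD_lt_reflect {l : List ℕ} (hl : List.Pairwise (· < ·) l) {a b : ℕ}
    (ha : a < l.length) (hb : b < l.length) (h : l.getD a 0 < l.getD b 0) : a < b := by
  by_contra hc
  push_neg at hc
  exact absurd (getD_monotone hl hc ha) (by omega)

lemma getD_inj {l : List ℕ} (hl : List.Pairwise (· < ·) l) {a b : ℕ}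
    (ha : a < l.length) (hb : b < l.length) (h : l.getD a 0 = l.getD b 0) : a = b := by
  by_contra hc
  rcases Nat.lt_or_ge a b with h1 | h1
  · exact absurd h (ne_of_lt (getD_strictMono hl h1 hb))
  · have h1 : b < a := by omega
    exact absurd h.symm (ne_of_lt (getD_strictMono hl h1 ha))

lemma exists_index_of_mem {α : Type*} {l : List α} {x : α} (h : x ∈ l) (d : α) :
    ∃ k, k < l.length ∧ l.getD k d = x := by
  rw [List.mem_iff_getElem] at h
  obtain ⟨k, hk, hkx⟩ := h
  exact ⟨k, hk, by rw [List.getD_eq_getElem _ _ hk]; exact hkx⟩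

end ListLemmas



section DyckBasics

variable {s : List Bool} {n : ℕ}

lemma mem_Npos_iff {x : ℕ} : x ∈ Npos s ↔ x < s.length ∧ s.getD x false = true := by
  simp [Npos, List.mem_filter, List.mem_range]

lemma mem_Epos_iff {x : ℕ} : x ∈ Epos s ↔ x < s.length ∧ s.getD x false = false := by
  simp [Epos, List.mem_filter, List.mem_range]

lemma sorted_Npos : List.Pairwise (· < ·) (Npos s) := sorted_filter_range _ _

lemma sorted_Epos : List.Pairwise (· < ·) (Epos s) := sorted_filter_range _ _

lemma length_Npos (hn : s.count true = n) : (Npos s).length = n := by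
  rw [Npos]
  rw [show (fun p => decide (s.getD p false = true)) = (fun p => decide (s.getD p false = true)) from rfl]
  rw [length_filter_range_getD s true, hn]

lemma length_Epos (hs : IsDyckWord s) (hn : s.count true = n) : (Epos s).length = n := by
  rw [Epos, length_filter_range_getD s false, ← hs.1, hn]

lemma Npos_getD_mem {j : ℕ} (hj : j < (Npos s).length) : (Npos s).getD j 0 ∈ Npos s := by
  rw [List.getD_eq_getElem _ _ hj]; exact List.getElem_mem _

lemma Epos_getD_mem {i : ℕ} (hi : i < (Epos s).length) : (Epos s).getD i 0 ∈ Epos s := by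
  rw [List.getD_eq_getElem _ _ hi]; exact List.getElem_mem _

lemma Npos_ne_Epos {x y : ℕ} (hx : x ∈ Npos s) (hy : y ∈ Epos s) : x ≠ y := by
  intro h
  rw [mem_Npos_iff] at hx
  rw [mem_Epos_iff] at hy
  rw [h] at hx
  rw [hx.2] at hy
  exact absurd hy.2 (by simp)

/-- Dyck property: the k-th North step comes before the k-th East step -/
lemma Npos_lt_Epos (hs : IsDyckWord s) (hn : s.count true = n) {k : ℕ} (hk : k < n) :
    (Npos s).getD k 0 < (Epos s).getD k 0 := by
  set E := (Epos s).getD k 0 with hE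
  set m := E + 1 with hm
  -- translate the prefix condition at m into filtered lengths
  have hcount : ∀ b : Bool, (s.take m).count b =
      ((List.range (min m s.length)).filter (fun p => decide (s.getD p false = b))).length := by
    intro b
    rw [← length_filter_range_getD (s.take m) b, List.length_take]
    congr 1
    apply List.filter_congr
    intro p hp
    rw [List.mem_range] at hp
    have hp1 : p < m := lt_of_lt_of_le hp (min_le_left _ _)
    have hp2 : p < s.length := lt_of_lt_of_le hp (min_le_right _ _)
    have : (s.take m).getD p false = s.getD p false := by
      rw [List.getD_eq_getElem _ _ (by rw [List.length_take]; exact hp),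
        List.getD_eq_getElem _ _ hp2, List.getElem_take]
    rw [this]
  have hrange : ∀ b : Bool,
      (List.range (min m s.length)).filter (fun p => decide (s.getD p false = b)) =
      ((List.range s.length).filter (fun p => decide (s.getD p false = b))).filter
        (fun x => decide (x < m)) := by
    intro b
    rw [List.filter_filter]
    have h1 : List.range (min m s.length) = (List.range s.length).filter (fun x => decide (x < m)) := by
      refine (fun hp h1 h2 => List.Perm.eq_of_pairwise (le := (· < ·)) (fun a b _ _ hab hba => absurd (lt_trans hab hba) (lt_irrefl a)) h1 h2 hp) ?_ ?_ ?_
      · apply List.perm_of_nodup_nodup_toFinset_eq List.nodup_range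
          (nodup_filter_range _ _)
        ext x
        simp [List.mem_range, Nat.lt_min, and_comm]
      · exact List.pairwise_lt_range
      · exact sorted_filter_range _ _
    rw [h1, List.filter_filter]
    apply List.filter_congr
    intro p _
    simp [Bool.and_comm]
  have hdyck := hs.2 m
  rw [hcount true, hcount false, hrange true, hrange false] at hdyck
  have hEfilter : k < (((List.range s.length).filter
      (fun p => decide (s.getD p false = false))).filter (fun x => decide (x < m))).length := by
    apply lt_length_filter_of_getD_lt _ sorted_Epos
    · rw [length_Epos hs hn]; exact hk
    · omega
  have hNfilter : k < (((List.range s.length).filter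
      (fun p => decide (s.getD p false = true))).filter (fun x => decide (x < m))).length := by
    calc k < _ := hEfilter
    _ ≤ _ := hdyck
  have hNlt : (Npos s).getD k 0 < m := getD_lt_of_lt_length_filter _ sorted_Npos _ _ hNfilter
  have hne : (Npos s).getD k 0 ≠ E := by
    apply Npos_ne_Epos (Npos_getD_mem ?_) (Epos_getD_mem ?_)
    · rw [length_Npos hn]; exact hk
    · rw [length_Epos hs hn]; exact hk
  omega

end DyckBasics



section Corners

variable {s : List Bool} {n : ℕ}

lemma mem_corners_iff {p : Fin n × Fin n} : p ∈ corners s n ↔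
    ¬ ((Npos s).getD p.2 0 < (Epos s).getD p.1 0) ∧
    (Npos s).getD ((p.2 : ℕ) - 1) 0 < (Epos s).getD p.1 0 ∧
    (Npos s).getD p.2 0 < (Epos s).getD ((p.1 : ℕ) + 1) 0 := by
  simp [corners, Finset.mem_filter]

lemma corner_spec (hs : IsDyckWord s) (hn : s.count true = n) {p : Fin n × Fin n}
    (h : p ∈ corners s n) :
    (p.1 : ℕ) < (p.2 : ℕ) ∧ 1 ≤ (p.2 : ℕ) ∧ (p.1 : ℕ) + 1 < n ∧
    (Npos s).getD (p.2 : ℕ) 0 = (Epos s).getD (p.1 : ℕ) 0 + 1 ∧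
    (Npos s).getD ((p.2 : ℕ) - 1) 0 < (Epos s).getD (p.1 : ℕ) 0 ∧
    (Npos s).getD (p.2 : ℕ) 0 < (Epos s).getD ((p.1 : ℕ) + 1) 0 := by
  obtain ⟨c1, c2, c3⟩ := mem_corners_iff.1 h
  have hlN : (Npos s).length = n := length_Npos hn
  have hlE : (Epos s).length = n := length_Epos hs hn
  have hj : (p.2 : ℕ) < n := p.2.isLt
  have hi : (p.1 : ℕ) < n := p.1.isLt
  have hEN : (Epos s).getD p.1 0 < (Npos s).getD p.2 0 := by
    have hle := le_of_not_gt c1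
    have hne : (Npos s).getD p.2 0 ≠ (Epos s).getD p.1 0 :=
      Npos_ne_Epos (Npos_getD_mem (by omega)) (Epos_getD_mem (by omega))
    omega
  have hj1 : 1 ≤ (p.2 : ℕ) := by
    by_contra hc
    have : (p.2 : ℕ) = 0 := by omega
    rw [this] at c2 hEN
    rw [show (0:ℕ)-1 = 0 from rfl] at c2
    omega
  have hi1 : (p.1 : ℕ) + 1 < n := by
    by_contra hc
    have : (Epos s).getD ((p.1 : ℕ) + 1) 0 = 0 := by
      apply List.getD_eq_default
      omega
    rw [this] at c3
    omega
  have hij : (p.1 : ℕ) < (p.2 : ℕ) := by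
    by_contra hc
    have h1 : (Npos s).getD p.2 0 ≤ (Npos s).getD p.1 0 :=
      getD_monotone sorted_Npos (by omega) (by omega)
    have h2 := Npos_lt_Epos hs hn hi
    omega
  have hNsucc : (Npos s).getD (p.2 : ℕ) 0 = (Epos s).getD (p.1 : ℕ) 0 + 1 := by
    by_contra hc
    set x := (Epos s).getD (p.1 : ℕ) 0 + 1 with hx
    have hxN : x < (Npos s).getD p.2 0 := by omega
    have hxlen : x < s.length := by
      have : (Npos s).getD p.2 0 ∈ Npos s := Npos_getD_mem (by omega)
      rw [mem_Npos_iff] at this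
      omega
    cases hb : s.getD x false with
    | true =>
      have hmem : x ∈ Npos s := mem_Npos_iff.2 ⟨hxlen, hb⟩
      obtain ⟨k, hk, hkx⟩ := exists_index_of_mem hmem 0
      have hkj : k < (p.2 : ℕ) := by
        apply getD_lt_reflect sorted_Npos hk (by omega)
        rw [hkx]; exact hxN
      have : (Npos s).getD k 0 ≤ (Npos s).getD ((p.2 : ℕ) - 1) 0 :=
        getD_monotone sorted_Npos (by omega) (by omega)
      omega
    | false =>
      have hmem : x ∈ Epos s := mem_Epos_iff.2 ⟨hxlen, hb⟩
      obtain ⟨k, hk, hkx⟩ := exists_index_of_mem hmem 0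
      have hik : (p.1 : ℕ) < k := by
        apply getD_lt_reflect sorted_Epos (by omega) hk
        rw [hkx]; omega
      have : (Epos s).getD ((p.1 : ℕ) + 1) 0 ≤ (Epos s).getD k 0 :=
        getD_monotone sorted_Epos (by omega) hk
      omega
  exact ⟨hij, hj1, hi1, hNsucc, c2, c3⟩

lemma corner_fst_inj (hs : IsDyckWord s) (hn : s.count true = n) {p p' : Fin n × Fin n}
    (h : p ∈ corners s n) (h' : p' ∈ corners s n) (hfst : p.1 = p'.1) : p = p' := by
  obtain ⟨_, hj1, _, hN, hc2, _⟩ := corner_spec hs hn h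
  obtain ⟨_, hj1', _, hN', hc2', _⟩ := corner_spec hs hn h'
  have hsnd : p.2 = p'.2 := by
    by_contra hc
    have hne : (p.2 : ℕ) ≠ (p'.2 : ℕ) := fun hcc => hc (Fin.ext hcc)
    rw [hfst] at hN hc2
    rcases Nat.lt_or_ge (p.2 : ℕ) (p'.2 : ℕ) with h1 | h1
    · have : (Npos s).getD (p.2 : ℕ) 0 ≤ (Npos s).getD ((p'.2 : ℕ) - 1) 0 :=
        getD_monotone sorted_Npos (by omega) (by rw [length_Npos hn]; omega)
      omega
    · have : (Npos s).getD (p'.2 : ℕ) 0 ≤ (Npos s).getD ((p.2 : ℕ) - 1) 0 :=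
        getD_monotone sorted_Npos (by omega) (by rw [length_Npos hn]; omega)
      omega
  exact Prod.ext hfst hsnd

lemma corner_snd_inj (hs : IsDyckWord s) (hn : s.count true = n) {p p' : Fin n × Fin n}
    (h : p ∈ corners s n) (h' : p' ∈ corners s n) (hsnd : p.2 = p'.2) : p = p' := by
  obtain ⟨_, _, hi1, hN, _, hc3⟩ := corner_spec hs hn h
  obtain ⟨_, _, hi1', hN', _, hc3'⟩ := corner_spec hs hn h'
  have hfst : p.1 = p'.1 := by
    by_contra hc
    have hne : (p.1 : ℕ) ≠ (p'.1 : ℕ) := fun hcc => hc (Fin.ext hcc)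
    rw [hsnd] at hN hc3
    rcases Nat.lt_or_ge (p.1 : ℕ) (p'.1 : ℕ) with h1 | h1
    · have : (Epos s).getD ((p.1 : ℕ) + 1) 0 ≤ (Epos s).getD (p'.1 : ℕ) 0 :=
        getD_monotone sorted_Epos (by omega) (by rw [length_Epos hs hn]; omega)
      omega
    · have : (Epos s).getD ((p'.1 : ℕ) + 1) 0 ≤ (Epos s).getD (p.1 : ℕ) 0 :=
        getD_monotone sorted_Epos (by omega) (by rw [length_Epos hs hn]; omega)
      omega
  exact Prod.ext hfst hsnd

end Corners



section Flip

open scoped Classical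

variable {s : List Bool} {n : ℕ}

lemma getD_set_bool (u : List Bool) (a : ℕ) (v : Bool) (p : ℕ) (ha : a < u.length) :
    (u.set a v).getD p false = if p = a then v else u.getD p false := by
  by_cases hpa : p = a
  · subst hpa
    rw [if_pos rfl, List.getD_eq_getElem _ _ (by rw [List.length_set]; exact ha)]
    simp
  · rw [if_neg hpa, List.getD_eq_getElem?_getD, List.getD_eq_getElem?_getD,
      List.getElem?_set_ne (fun h => hpa h.symm)]

lemma corner_valley (hs : IsDyckWord s) (hn : s.count true = n) {x : Fin n × Fin n}
    (h : x ∈ corners s n) :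
    (Epos s).getD (x.1 : ℕ) 0 + 1 < s.length ∧
    (Npos s).getD (x.2 : ℕ) 0 = (Epos s).getD (x.1 : ℕ) 0 + 1 := by
  obtain ⟨_, _, _, hN, _, _⟩ := corner_spec hs hn h
  have hmem : (Npos s).getD (x.2 : ℕ) 0 ∈ Npos s :=
    Npos_getD_mem (by rw [length_Npos hn]; exact x.2.isLt)
  rw [mem_Npos_iff] at hmem
  exact ⟨by omega, hN⟩

lemma flip_foldl_spec (hs : IsDyckWord s) (hn : s.count true = n)
    (L : List (Fin n × Fin n)) (hL : ∀ x ∈ L, x ∈ corners s n) :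
    ∀ z : List Bool, z.length = s.length →
    (L.foldl (fun t p => (t.set ((Epos s).getD (p.1 : ℕ) 0) true).set
      ((Epos s).getD (p.1 : ℕ) 0 + 1) false) z).length = s.length ∧
    ∀ p, p < s.length →
    (L.foldl (fun t p => (t.set ((Epos s).getD (p.1 : ℕ) 0) true).set
      ((Epos s).getD (p.1 : ℕ) 0 + 1) false) z).getD p false =
      if ∃ x ∈ L, (Epos s).getD (x.1 : ℕ) 0 = p then true
      else if ∃ x ∈ L, (Epos s).getD (x.1 : ℕ) 0 + 1 = p then false
      else z.getD p false := by
  induction L with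
  | nil =>
    intro z hz
    refine ⟨hz, fun p hp => ?_⟩
    simp
  | cons a L' ih =>
    intro z hz
    have ha := hL a (List.mem_cons_self)
    have hL' : ∀ x ∈ L', x ∈ corners s n := fun x hx => hL x (List.mem_cons_of_mem a hx)
    obtain ⟨hlen1, hNa⟩ := corner_valley hs hn ha
    set Ea := (Epos s).getD (a.1 : ℕ) 0 with hEa
    have hz' : ((z.set Ea true).set (Ea + 1) false).length = s.length := by
      rw [List.length_set, List.length_set]; exact hz
    obtain ⟨ihlen, ihgetD⟩ := ih hL' ((z.set Ea true).set (Ea + 1) false) hz'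
    rw [List.foldl_cons]
    refine ⟨ihlen, fun p hp => ?_⟩
    rw [ihgetD p hp]
    have hset : ((z.set Ea true).set (Ea + 1) false).getD p false =
        if p = Ea then true else if p = Ea + 1 then false else z.getD p false := by
      rw [getD_set_bool _ _ _ _ (by rw [List.length_set, hz]; exact hlen1),
        getD_set_bool _ _ _ _ (by rw [hz]; omega)]
      by_cases h1 : p = Ea + 1
      · subst h1
        rw [if_pos rfl, if_neg (by omega), if_pos rfl]
      · rw [if_neg h1]
        by_cases h2 : p = Ea
        · rw [if_pos h2, if_pos h2]
        · rw [if_neg h2, if_neg h2, if_neg h1]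
    -- now case analysis
    by_cases hA : ∃ x ∈ L', (Epos s).getD (x.1 : ℕ) 0 = p
    · rw [if_pos hA, if_pos (by obtain ⟨x, hx1, hx2⟩ := hA; exact ⟨x, List.mem_cons_of_mem a hx1, hx2⟩)]
    · rw [if_neg hA]
      by_cases hB : ∃ x ∈ L', (Epos s).getD (x.1 : ℕ) 0 + 1 = p
      · rw [if_pos hB]
        -- show the head condition fails: p is a North position of s, Ea an East position
        obtain ⟨x, hx1, hx2⟩ := hB
        obtain ⟨_, hNx⟩ := corner_valley hs hn (hL' x hx1)
        have hne : ¬ ∃ y ∈ a :: L', (Epos s).getD (y.1 : ℕ) 0 = p := by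
          rintro ⟨y, hy1, hy2⟩
          have hmemN : (Npos s).getD (x.2 : ℕ) 0 ∈ Npos s :=
            Npos_getD_mem (by rw [length_Npos hn]; exact x.2.isLt)
          have hmemE : (Epos s).getD (y.1 : ℕ) 0 ∈ Epos s :=
            Epos_getD_mem (by rw [length_Epos hs hn]; exact y.1.isLt)
          exact Npos_ne_Epos hmemN hmemE (by omega)
        rw [if_neg hne, if_pos ⟨x, List.mem_cons_of_mem a hx1, hx2⟩]
      · rw [if_neg hB, hset]
        by_cases h1 : p = Ea
        · rw [if_pos h1, if_pos ⟨a, List.mem_cons_self, h1.symm⟩]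
        · rw [if_neg h1]
          by_cases h2 : p = Ea + 1
          · rw [if_pos h2]
            have hne : ¬ ∃ y ∈ a :: L', (Epos s).getD (y.1 : ℕ) 0 = p := by
              rintro ⟨y, hy1, hy2⟩
              have hmemN : (Npos s).getD (a.2 : ℕ) 0 ∈ Npos s :=
                Npos_getD_mem (by rw [length_Npos hn]; exact a.2.isLt)
              have hmemE : (Epos s).getD (y.1 : ℕ) 0 ∈ Epos s :=
                Epos_getD_mem (by rw [length_Epos hs hn]; exact y.1.isLt)
              exact Npos_ne_Epos hmemN hmemE (by omega)
            rw [if_neg hne, if_pos ⟨a, List.mem_cons_self, h2.symm⟩]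
          · rw [if_neg h2]
            have hne1 : ¬ ∃ y ∈ a :: L', (Epos s).getD (y.1 : ℕ) 0 = p := by
              rintro ⟨y, hy1, hy2⟩
              rcases List.mem_cons.1 hy1 with hy | hy
              · subst hy; exact h1 hy2.symm
              · exact hA ⟨y, hy, hy2⟩
            have hne2 : ¬ ∃ y ∈ a :: L', (Epos s).getD (y.1 : ℕ) 0 + 1 = p := by
              rintro ⟨y, hy1, hy2⟩
              rcases List.mem_cons.1 hy1 with hy | hy
              · subst hy; exact h2 hy2.symm
              · exact hB ⟨y, hy, hy2⟩
            rw [if_neg hne1, if_neg hne2]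

lemma flipSet_length (hs : IsDyckWord s) (hn : s.count true = n)
    (S : Finset (Fin n × Fin n)) (hS : S ⊆ corners s n) :
    (flipSet s S).length = s.length :=
  (flip_foldl_spec hs hn S.toList (fun x hx => hS (Finset.mem_toList.1 hx)) s rfl).1

lemma flipSet_getD (hs : IsDyckWord s) (hn : s.count true = n)
    (S : Finset (Fin n × Fin n)) (hS : S ⊆ corners s n) (p : ℕ) (hp : p < s.length) :
    (flipSet s S).getD p false =
      if ∃ x ∈ S, (Epos s).getD (x.1 : ℕ) 0 = p then true
      else if ∃ x ∈ S, (Epos s).getD (x.1 : ℕ) 0 + 1 = p then false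
      else s.getD p false := by
  have h := (flip_foldl_spec hs hn S.toList (fun x hx => hS (Finset.mem_toList.1 hx)) s rfl).2 p hp
  rw [flipSet, h]
  congr 1
  · simp [Finset.mem_toList]
  · congr 1
    simp [Finset.mem_toList]

end Flip



section FlipPos

open scoped Classical

variable {s : List Bool} {n : ℕ} {S : Finset (Fin n × Fin n)}

lemma Npos_flipSet (hs : IsDyckWord s) (hn : s.count true = n) (hS : S ⊆ corners s n) :
    Npos (flipSet s S) = (Npos s).map
      (fun x => if ∃ pr ∈ S, (Npos s).getD (pr.2 : ℕ) 0 = x then x - 1 else x) := by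
  set g := fun x => if ∃ pr ∈ S, (Npos s).getD (pr.2 : ℕ) 0 = x then x - 1 else x with hg
  have hval : ∀ pr ∈ S, (Npos s).getD (pr.2 : ℕ) 0 = (Epos s).getD (pr.1 : ℕ) 0 + 1 :=
    fun pr hpr => (corner_valley hs hn (hS hpr)).2
  have hsorted2 : List.Pairwise (· < ·) ((Npos s).map g) := by
    rw [List.pairwise_map]
    apply List.Pairwise.imp_of_mem (R := (· < ·)) ?_ sorted_Npos
    intro a b ha hb hab
    simp only [hg]
    by_cases haS : ∃ pr' ∈ S, (Npos s).getD (pr'.2 : ℕ) 0 = a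
    · obtain ⟨pr', hpr', hpra⟩ := haS
      rw [if_pos ⟨pr', hpr', hpra⟩]
      have ha1 : a = (Epos s).getD (pr'.1 : ℕ) 0 + 1 := by rw [← hpra, hval pr' hpr']
      split <;> omega
    · rw [if_neg haS]
      by_cases hbS : ∃ pr ∈ S, (Npos s).getD (pr.2 : ℕ) 0 = b
      · obtain ⟨pr, hpr, hprb⟩ := hbS
        rw [if_pos ⟨pr, hpr, hprb⟩]
        have hb1 : b = (Epos s).getD (pr.1 : ℕ) 0 + 1 := by rw [← hprb, hval pr hpr]
        have hne : a ≠ b - 1 := by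
          have : b - 1 ∈ Epos s := by
            rw [hb1]
            simp only [Nat.add_sub_cancel]
            exact Epos_getD_mem (by rw [length_Epos hs hn]; exact pr.1.isLt)
          exact Npos_ne_Epos ha this
        omega
      · rw [if_neg hbS]
        exact hab
  refine (fun hp h1 h2 => List.Perm.eq_of_pairwise (le := (· < ·)) (fun a b _ _ hab hba => absurd (lt_trans hab hba) (lt_irrefl a)) h1 h2 hp) ?_ ?_ ?_
  · apply List.perm_of_nodup_nodup_toFinset_eq
    · exact sorted_Npos.nodup
    · exact hsorted2.nodup
    · ext x
      simp only [List.mem_toFinset, List.mem_map]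
      constructor
      · intro hx
        rw [mem_Npos_iff, flipSet_length hs hn S hS] at hx
        obtain ⟨hxlen, hxval⟩ := hx
        rw [flipSet_getD hs hn S hS x hxlen] at hxval
        by_cases hA : ∃ pr ∈ S, (Epos s).getD (pr.1 : ℕ) 0 = x
        · obtain ⟨pr, hpr, hprx⟩ := hA
          refine ⟨(Npos s).getD (pr.2 : ℕ) 0,
            Npos_getD_mem (by rw [length_Npos hn]; exact pr.2.isLt), ?_⟩
          simp only [hg]
          rw [if_pos ⟨pr, hpr, rfl⟩, hval pr hpr, hprx]
          simp
        · rw [if_neg hA] at hxval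
          by_cases hB : ∃ pr ∈ S, (Epos s).getD (pr.1 : ℕ) 0 + 1 = x
          · rw [if_pos hB] at hxval; exact absurd hxval (by simp)
          · rw [if_neg hB] at hxval
            refine ⟨x, mem_Npos_iff.2 ⟨hxlen, hxval⟩, ?_⟩
            simp only [hg]
            have hcond : ¬ ∃ pr ∈ S, (Npos s).getD (pr.2 : ℕ) 0 = x := by
              rintro ⟨pr, hpr, hprx⟩
              exact hB ⟨pr, hpr, by rw [← hval pr hpr, hprx]⟩
            rw [if_neg hcond]
      · rintro ⟨y, hy, hyx⟩
        rw [mem_Npos_iff, flipSet_length hs hn S hS]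
        simp only [hg] at hyx
        by_cases hyS : ∃ pr ∈ S, (Npos s).getD (pr.2 : ℕ) 0 = y
        · obtain ⟨pr, hpr, hpry⟩ := hyS
          rw [if_pos ⟨pr, hpr, hpry⟩] at hyx
          have hy1 : y = (Epos s).getD (pr.1 : ℕ) 0 + 1 := by rw [← hpry, hval pr hpr]
          have hxE : x = (Epos s).getD (pr.1 : ℕ) 0 := by omega
          have hxlen : x < s.length := by
            have : (Epos s).getD (pr.1 : ℕ) 0 ∈ Epos s :=
              Epos_getD_mem (by rw [length_Epos hs hn]; exact pr.1.isLt)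
            rw [mem_Epos_iff] at this
            omega
          refine ⟨hxlen, ?_⟩
          rw [flipSet_getD hs hn S hS x hxlen, if_pos ⟨pr, hpr, hxE.symm⟩]
        · rw [if_neg hyS] at hyx
          rw [mem_Npos_iff] at hy
          rw [← hyx]
          refine ⟨hy.1, ?_⟩
          rw [flipSet_getD hs hn S hS y hy.1]
          have hA : ¬ ∃ pr ∈ S, (Epos s).getD (pr.1 : ℕ) 0 = y := by
            rintro ⟨pr, hpr, hprx⟩
            exact Npos_ne_Epos (mem_Npos_iff.2 hy)
              (Epos_getD_mem (by rw [length_Epos hs hn]; exact pr.1.isLt)) (by rw [hprx])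
          have hB : ¬ ∃ pr ∈ S, (Epos s).getD (pr.1 : ℕ) 0 + 1 = y := by
            rintro ⟨pr, hpr, hprx⟩
            exact hyS ⟨pr, hpr, by rw [hval pr hpr, hprx]⟩
          rw [if_neg hA, if_neg hB]
          exact hy.2
  · exact sorted_Npos
  · exact hsorted2


lemma Epos_flipSet (hs : IsDyckWord s) (hn : s.count true = n) (hS : S ⊆ corners s n) :
    Epos (flipSet s S) = (Epos s).map
      (fun x => if ∃ pr ∈ S, (Epos s).getD (pr.1 : ℕ) 0 = x then x + 1 else x) := by
  set g := fun x => if ∃ pr ∈ S, (Epos s).getD (pr.1 : ℕ) 0 = x then x + 1 else x with hg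
  have hval : ∀ pr ∈ S, (Npos s).getD (pr.2 : ℕ) 0 = (Epos s).getD (pr.1 : ℕ) 0 + 1 :=
    fun pr hpr => (corner_valley hs hn (hS hpr)).2
  have hsorted2 : List.Pairwise (· < ·) ((Epos s).map g) := by
    rw [List.pairwise_map]
    apply List.Pairwise.imp_of_mem (R := (· < ·)) ?_ sorted_Epos
    intro a b ha hb hab
    simp only [hg]
    by_cases haS : ∃ pr' ∈ S, (Epos s).getD (pr'.1 : ℕ) 0 = a
    · obtain ⟨pr', hpr', hpra⟩ := haS
      rw [if_pos ⟨pr', hpr', hpra⟩]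
      have hne : a + 1 ≠ b := by
        have : a + 1 ∈ Npos s := by
          rw [← hpra, ← hval pr' hpr']
          exact Npos_getD_mem (by rw [length_Npos hn]; exact pr'.2.isLt)
        exact Npos_ne_Epos this hb
      split <;> omega
    · rw [if_neg haS]
      split <;> omega
  refine (fun hp h1 h2 => List.Perm.eq_of_pairwise (le := (· < ·)) (fun a b _ _ hab hba => absurd (lt_trans hab hba) (lt_irrefl a)) h1 h2 hp) ?_ ?_ ?_
  · apply List.perm_of_nodup_nodup_toFinset_eq
    · exact sorted_Epos.nodup
    · exact hsorted2.nodup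
    · ext x
      simp only [List.mem_toFinset, List.mem_map]
      constructor
      · intro hx
        rw [mem_Epos_iff, flipSet_length hs hn S hS] at hx
        obtain ⟨hxlen, hxval⟩ := hx
        rw [flipSet_getD hs hn S hS x hxlen] at hxval
        by_cases hA : ∃ pr ∈ S, (Epos s).getD (pr.1 : ℕ) 0 = x
        · rw [if_pos hA] at hxval; exact absurd hxval (by simp)
        · rw [if_neg hA] at hxval
          by_cases hB : ∃ pr ∈ S, (Epos s).getD (pr.1 : ℕ) 0 + 1 = x
          · obtain ⟨pr, hpr, hprx⟩ := hB
            refine ⟨(Epos s).getD (pr.1 : ℕ) 0,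
              Epos_getD_mem (by rw [length_Epos hs hn]; exact pr.1.isLt), ?_⟩
            simp only [hg]
            rw [if_pos ⟨pr, hpr, rfl⟩, hprx]
          · rw [if_neg hB] at hxval
            refine ⟨x, mem_Epos_iff.2 ⟨hxlen, hxval⟩, ?_⟩
            simp only [hg]
            rw [if_neg hA]
      · rintro ⟨y, hy, hyx⟩
        rw [mem_Epos_iff, flipSet_length hs hn S hS]
        simp only [hg] at hyx
        by_cases hyS : ∃ pr ∈ S, (Epos s).getD (pr.1 : ℕ) 0 = y
        · obtain ⟨pr, hpr, hpry⟩ := hyS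
          rw [if_pos ⟨pr, hpr, hpry⟩] at hyx
          have hxN : x = (Npos s).getD (pr.2 : ℕ) 0 := by
            rw [hval pr hpr, hpry, hyx]
          have hxlen : x < s.length := by
            have : (Npos s).getD (pr.2 : ℕ) 0 ∈ Npos s :=
              Npos_getD_mem (by rw [length_Npos hn]; exact pr.2.isLt)
            rw [mem_Npos_iff] at this
            omega
          refine ⟨hxlen, ?_⟩
          rw [flipSet_getD hs hn S hS x hxlen]
          have hA : ¬ ∃ pr' ∈ S, (Epos s).getD (pr'.1 : ℕ) 0 = x := by
            rintro ⟨pr', hpr', hprx⟩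
            have : (Npos s).getD (pr.2 : ℕ) 0 ∈ Npos s :=
              Npos_getD_mem (by rw [length_Npos hn]; exact pr.2.isLt)
            exact Npos_ne_Epos this
              (Epos_getD_mem (by rw [length_Epos hs hn]; exact pr'.1.isLt))
              (by rw [← hxN, hprx])
          have hB : ∃ pr' ∈ S, (Epos s).getD (pr'.1 : ℕ) 0 + 1 = x :=
            ⟨pr, hpr, by rw [hpry, hyx]⟩
          rw [if_neg hA, if_pos hB]
        · rw [if_neg hyS] at hyx
          rw [mem_Epos_iff] at hy
          rw [← hyx]
          refine ⟨hy.1, ?_⟩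
          rw [flipSet_getD hs hn S hS y hy.1]
          rw [if_neg hyS]
          by_cases hB : ∃ pr ∈ S, (Epos s).getD (pr.1 : ℕ) 0 + 1 = y
          · rw [if_pos hB]
          · rw [if_neg hB]
            exact hy.2
  · exact sorted_Epos
  · exact hsorted2


lemma Npos_flipSet_getD (hs : IsDyckWord s) (hn : s.count true = n) (hS : S ⊆ corners s n)
    (j : Fin n) :
    (Npos (flipSet s S)).getD (j : ℕ) 0 =
      if ∃ i : Fin n, (i, j) ∈ S then (Npos s).getD (j : ℕ) 0 - 1
      else (Npos s).getD (j : ℕ) 0 := by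
  rw [Npos_flipSet hs hn hS]
  have hlen : (j : ℕ) < ((Npos s).map
      (fun x => if ∃ pr ∈ S, (Npos s).getD (pr.2 : ℕ) 0 = x then x - 1 else x)).length := by
    rw [List.length_map, length_Npos hn]; exact j.isLt
  rw [List.getD_eq_getElem _ _ hlen, List.getElem_map,
    ← List.getD_eq_getElem _ _ (by rw [length_Npos hn]; exact j.isLt)]
  have hcond : (∃ pr ∈ S, (Npos s).getD (pr.2 : ℕ) 0 = (Npos s).getD (j : ℕ) 0) ↔
      ∃ i : Fin n, (i, j) ∈ S := by
    constructor
    · rintro ⟨pr, hpr, hpreq⟩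
      have : (pr.2 : ℕ) = (j : ℕ) := getD_inj sorted_Npos
        (by rw [length_Npos hn]; exact pr.2.isLt) (by rw [length_Npos hn]; exact j.isLt) hpreq
      have h2 : pr.2 = j := Fin.ext this
      exact ⟨pr.1, by rw [← h2]; exact hpr⟩
    · rintro ⟨i, hi⟩
      exact ⟨(i, j), hi, rfl⟩
  by_cases h : ∃ i : Fin n, (i, j) ∈ S
  · rw [if_pos (hcond.2 h), if_pos h]
  · rw [if_neg (fun hc => h (hcond.1 hc)), if_neg h]

lemma Epos_flipSet_getD (hs : IsDyckWord s) (hn : s.count true = n) (hS : S ⊆ corners s n)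
    (i : Fin n) :
    (Epos (flipSet s S)).getD (i : ℕ) 0 =
      if ∃ j : Fin n, (i, j) ∈ S then (Epos s).getD (i : ℕ) 0 + 1
      else (Epos s).getD (i : ℕ) 0 := by
  rw [Epos_flipSet hs hn hS]
  have hlen : (i : ℕ) < ((Epos s).map
      (fun x => if ∃ pr ∈ S, (Epos s).getD (pr.1 : ℕ) 0 = x then x + 1 else x)).length := by
    rw [List.length_map, length_Epos hs hn]; exact i.isLt
  rw [List.getD_eq_getElem _ _ hlen, List.getElem_map,
    ← List.getD_eq_getElem _ _ (by rw [length_Epos hs hn]; exact i.isLt)]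
  have hcond : (∃ pr ∈ S, (Epos s).getD (pr.1 : ℕ) 0 = (Epos s).getD (i : ℕ) 0) ↔
      ∃ j : Fin n, (i, j) ∈ S := by
    constructor
    · rintro ⟨pr, hpr, hpreq⟩
      have : (pr.1 : ℕ) = (i : ℕ) := getD_inj sorted_Epos
        (by rw [length_Epos hs hn]; exact pr.1.isLt)
        (by rw [length_Epos hs hn]; exact i.isLt) hpreq
      have h2 : pr.1 = i := Fin.ext this
      exact ⟨pr.2, by rw [← h2]; exact hpr⟩
    · rintro ⟨j, hj⟩
      exact ⟨(i, j), hj, rfl⟩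
  by_cases h : ∃ j : Fin n, (i, j) ∈ S
  · rw [if_pos (hcond.2 h), if_pos h]
  · rw [if_neg (fun hc => h (hcond.1 hc)), if_neg h]

lemma mem_area_iff {s' : List Bool} {p : Fin n × Fin n} : p ∈ area s' n ↔
    (p.1 : ℕ) < (p.2 : ℕ) ∧ (Npos s').getD p.2 0 < (Epos s').getD p.1 0 := by
  simp [area, Finset.mem_filter]

lemma corner_not_mem_area (h : (p : Fin n × Fin n) ∈ corners s n) : p ∉ area s n := by
  intro hp
  exact (mem_corners_iff.1 h).1 (mem_area_iff.1 hp).2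

lemma area_flipSet (hs : IsDyckWord s) (hn : s.count true = n) (hS : S ⊆ corners s n) :
    area (flipSet s S) n = area s n ∪ S := by
  ext p
  rw [mem_area_iff, Finset.mem_union, mem_area_iff]
  have h1 := Npos_flipSet_getD hs hn hS p.2
  have h2 := Epos_flipSet_getD hs hn hS p.1
  rw [h1, h2]
  have hNE : (Npos s).getD (p.2 : ℕ) 0 ≠ (Epos s).getD (p.1 : ℕ) 0 :=
    Npos_ne_Epos (Npos_getD_mem (by rw [length_Npos hn]; exact p.2.isLt))
      (Epos_getD_mem (by rw [length_Epos hs hn]; exact p.1.isLt))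
  constructor
  · rintro ⟨hlt, hflip⟩
    by_cases hpS : p ∈ S
    · exact Or.inr hpS
    · refine Or.inl ⟨hlt, ?_⟩
      by_cases hP2 : ∃ i : Fin n, (i, p.2) ∈ S
      · obtain ⟨i', hi'⟩ := hP2
        have hspec2 := (corner_valley hs hn (hS hi')).2
        simp only at hspec2
        rw [if_pos ⟨i', hi'⟩] at hflip
        by_cases hP1 : ∃ j : Fin n, (p.1, j) ∈ S
        · obtain ⟨j', hj'⟩ := hP1
          have hspec1 := (corner_valley hs hn (hS hj')).2
          simp only at hspec1
          rw [if_pos ⟨j', hj'⟩] at hflip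
          have hne2 : (Npos s).getD (p.2 : ℕ) 0 ≠ (Epos s).getD (p.1 : ℕ) 0 + 1 := by
            intro hc
            have heq : (p.2 : ℕ) = (j' : ℕ) := getD_inj sorted_Npos
              (by rw [length_Npos hn]; exact p.2.isLt)
              (by rw [length_Npos hn]; exact j'.isLt) (by rw [hc, hspec1])
            have : p = (p.1, j') := Prod.ext rfl (Fin.ext heq)
            exact hpS (this ▸ hj')
          omega
        · rw [if_neg hP1] at hflip
          omega
      · rw [if_neg hP2] at hflip
        by_cases hP1 : ∃ j : Fin n, (p.1, j) ∈ S
        · rw [if_pos hP1] at hflip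
          omega
        · rw [if_neg hP1] at hflip
          exact hflip
  · rintro (⟨hlt, hlt2⟩ | hpS)
    · refine ⟨hlt, ?_⟩
      split_ifs <;> omega
    · obtain ⟨hlt, _, _, hN, _, _⟩ := corner_spec hs hn (hS hpS)
      refine ⟨hlt, ?_⟩
      rw [if_pos ⟨p.1, by rwa [Prod.mk.eta]⟩, if_pos ⟨p.2, by rwa [Prod.mk.eta]⟩]
      omega

end FlipPos



section Final

open scoped Classical

lemma one_sub_q_ne_zero : (1 : K) - q ≠ 0 := by
  rw [sub_ne_zero]
  intro h
  have hq : q = RatFunc.X := rfl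
  rw [hq] at h
  rw [← RatFunc.algebraMap_X, ← map_one (algebraMap (Polynomial ℚ) (RatFunc ℚ))] at h
  have := RatFunc.algebraMap_injective ℚ h
  have h2 := congrArg (fun f => Polynomial.coeff f 1) this
  simp [Polynomial.coeff_one] at h2

lemma incl_excl_sum {ι : Type*} [DecidableEq ι] (C : Finset ι) (P : ι → Prop)
    [DecidablePred P] :
    ∑ S ∈ C.powerset, (-1 : K) ^ S.card * q ^ (S.filter P).card =
      (1 - q) ^ (C.filter P).card * 0 ^ (C.filter (fun p => ¬ P p)).card := by
  have h1 : ∀ S : Finset ι, (-1 : K) ^ S.card * q ^ (S.filter P).card =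
      ∏ p ∈ S, (-(if P p then (q : K) else 1)) := by
    intro S
    have : ∀ p : ι, (-(if P p then (q : K) else 1)) = (-1) * (if P p then (q : K) else 1) := by
      intro p; ring
    simp_rw [this]
    rw [Finset.prod_mul_distrib, Finset.prod_const]
    congr 1
    rw [Finset.prod_ite (fun _ => (q : K)) (fun _ => (1 : K)), Finset.prod_const,
      Finset.prod_const, one_pow, mul_one]
  calc ∑ S ∈ C.powerset, (-1 : K) ^ S.card * q ^ (S.filter P).card
      = ∑ S ∈ C.powerset, ∏ p ∈ S, (-(if P p then (q : K) else 1)) :=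
        Finset.sum_congr rfl (fun S _ => h1 S)
    _ = ∑ S ∈ C.powerset, (∏ p ∈ S, (-(if P p then (q : K) else 1))) *
          ∏ p ∈ C \ S, (1 : K) := by
        apply Finset.sum_congr rfl
        intro S _
        rw [Finset.prod_const_one, mul_one]
    _ = ∏ p ∈ C, ((-(if P p then (q : K) else 1)) + 1) := (Finset.prod_add _ _ C).symm
    _ = ∏ p ∈ C, (if P p then (1 : K) - q else 0) := by
        apply Finset.prod_congr rfl
        intro p _
        by_cases h : P p <;> simp [h] <;> ring
    _ = (1 - q) ^ (C.filter P).card * 0 ^ (C.filter (fun p => ¬ P p)).card := by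
        rw [Finset.prod_ite (fun _ => (1 : K) - q) (fun _ => (0 : K)), Finset.prod_const,
          Finset.prod_const]

end Final


theorem chiwt_zero_inclusion_exclusion (s : List Bool) (n : ℕ)
    (hs : IsDyckWord s) (hn : s.count true = n) :
    chiwt (area s n) (corners s n) 0 =
      MvPowerSeries.C (σ := ℕ+) (R := K) ((1 - q) ^ (-((corners s n).card : ℤ))) *
        ∑ S ∈ (corners s n).powerset,
          MvPowerSeries.C (σ := ℕ+) (R := K) ((-1) ^ S.card) * chi (area (flipSet s S) n) := by
  classical
  apply MvPowerSeries.ext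
  intro d
  rw [MvPowerSeries.coeff_C_mul, map_sum]
  simp_rw [MvPowerSeries.coeff_C_mul, MvPowerSeries.coeff_apply]
  have hrw : ∀ S ∈ (corners s n).powerset,
      (-1 : K) ^ S.card * (chi (area (flipSet s S) n)) d =
      ∑ w : Fin n → {x // x ∈ d.support},
        (if (∑ i : Fin n, Finsupp.single ((w i : ℕ+)) 1) = d
        then (-1 : K) ^ S.card *
          (q ^ (((area s n).filter (fun p => (w p.1 : ℕ+) > (w p.2 : ℕ+))).card)
          * q ^ ((S.filter (fun p => (w p.1 : ℕ+) > (w p.2 : ℕ+))).card)) else 0) := by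
    intro S hS
    have hSsub : S ⊆ corners s n := Finset.mem_powerset.1 hS
    have hAS : Disjoint (area s n) S :=
      Finset.disjoint_left.2 (fun a ha haS => corner_not_mem_area (hSsub haS) ha)
    simp only [chi]
    rw [Finset.mul_sum]
    apply Finset.sum_congr rfl
    intro w _
    by_cases hcond : (∑ i : Fin n, Finsupp.single ((w i : ℕ+)) 1) = d
    · rw [if_pos hcond, if_pos hcond, area_flipSet hs hn hSsub, Finset.filter_union,
        Finset.card_union_of_disjoint (Finset.disjoint_filter_filter hAS), pow_add]
    · rw [if_neg hcond, if_neg hcond, mul_zero]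
  rw [Finset.sum_congr rfl hrw, Finset.sum_comm, Finset.mul_sum]
  simp only [chiwt]
  apply Finset.sum_congr rfl
  intro w _
  by_cases hcond : (∑ i : Fin n, Finsupp.single ((w i : ℕ+)) 1) = d
  · rw [if_pos hcond]
    simp_rw [if_pos hcond]
    have hpull : ∑ S ∈ (corners s n).powerset, (-1 : K) ^ S.card *
        (q ^ (((area s n).filter (fun p => (w p.1 : ℕ+) > (w p.2 : ℕ+))).card)
          * q ^ ((S.filter (fun p => (w p.1 : ℕ+) > (w p.2 : ℕ+))).card)) =
        q ^ (((area s n).filter (fun p => (w p.1 : ℕ+) > (w p.2 : ℕ+))).card) *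
        ∑ S ∈ (corners s n).powerset,
          (-1 : K) ^ S.card * q ^ ((S.filter (fun p => (w p.1 : ℕ+) > (w p.2 : ℕ+))).card) := by
      rw [Finset.mul_sum]
      apply Finset.sum_congr rfl
      intro S _
      ring
    rw [hpull, incl_excl_sum]
    have hfilter : (corners s n).filter (fun p => (w p.1 : ℕ+) ≤ (w p.2 : ℕ+)) =
        (corners s n).filter (fun p => ¬ ((w p.1 : ℕ+) > (w p.2 : ℕ+))) := by
      apply Finset.filter_congr
      intro x _
      simp [not_lt]
    have hzero : ∀ F : Finset (Fin n × Fin n),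
        (∏ p ∈ F, (0 : Fin n × Fin n → K) p) = (0 : K) ^ F.card := by
      intro F
      simp only [Pi.zero_apply]
      exact Finset.prod_const 0
    rw [hzero, hfilter]
    set c1 := ((corners s n).filter (fun p => (w p.1 : ℕ+) > (w p.2 : ℕ+))).card with hc1
    set c2 := ((corners s n).filter (fun p => ¬ ((w p.1 : ℕ+) > (w p.2 : ℕ+)))).card with hc2
    have hcc : c1 + c2 = (corners s n).card :=
      Finset.card_filter_add_card_filter_not _
    rcases Nat.eq_zero_or_pos c2 with h2 | h2
    · rw [h2, pow_zero, mul_one, mul_one]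
      have hc1e : c1 = (corners s n).card := by omega
      rw [hc1e, zpow_neg, zpow_natCast]
      rw [mul_comm (q ^ _) ((1 - q) ^ _), ← mul_assoc,
        inv_mul_cancel₀ (pow_ne_zero _ one_sub_q_ne_zero), one_mul]
    · rw [zero_pow (by omega : c2 ≠ 0)]
      simp
  · rw [if_neg hcond]
    simp_rw [if_neg hcond]
    simp

end
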